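/- Let G be a group generated by a finite set Y, let N ⊆ G be a subset, and let f : ℕ → [0,1] be a function such that for all n ≥ 0 we have |N ∩ B_Y(n)| / |B_Y(n)| ≤ f(n), and for every g ∈ G \ N, |{h ∈ B_Y(n) : [g,h] ∈ N}| / |B_Y(n)| ≤ f(n). Then for all integers r, n ≥ 0, |{(x₀,…,x_r) ∈ B_Y(n)^{r+1} : [x₀,…,x_r] ∈ N}| / |B_Y(n)|^{r+1} ≤ (r+1)·f(n), where [x₀,…,x_r] denotes the (r+1)-fold left-normed simple commutator. -/

import Mathlib

noncomputable section

/-- Ball of radius `n` in the word metric with respect to a generating set `Y`. -/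
def wordBall {G : Type*} [Group G] (Y : Set G) (n : ℕ) : Set G :=
  {g | ∃ l : List G, (∀ x ∈ l, x ∈ Y ∨ x⁻¹ ∈ Y) ∧ l.length ≤ n ∧ l.prod = g}

/-- The left-normed simple commutator `[x₀,…,x_r]`, with `[g,h] = g⁻¹h⁻¹gh`. -/
def simpleCommutator {G : Type*} [Group G] : List G → G
  | [] => 1
  | x :: xs => xs.foldl (fun c y => c⁻¹ * y⁻¹ * c * y) x

lemma wordBall_finite {G : Type*} [Group G] {Y : Set G} (hY : Y.Finite) (n : ℕ) :
    (wordBall Y n).Finite := by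
  induction n with
  | zero =>
    apply (Set.finite_singleton (1 : G)).subset
    rintro g ⟨l, -, hlen, hprod⟩
    interval_cases h : l.length
    · rw [List.length_eq_zero_iff] at h
      simp [← hprod, h]
  | succ n ih =>
    apply (((Set.finite_singleton (1 : G)).union
      (((hY.union hY.inv).prod ih).image (fun p : G × G => p.1 * p.2)))).subset
    rintro g ⟨l, hmem, hlen, hprod⟩
    match l with
    | [] => exact Or.inl (by simp [← hprod])
    | x :: xs =>
      refine Or.inr ⟨(x, xs.prod), ⟨?_, ⟨xs, fun a ha => hmem a (List.mem_cons_of_mem _ ha),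
        by simpa using Nat.succ_le_succ_iff.mp hlen, rfl⟩⟩, by simp [← hprod]⟩
      rcases hmem x List.mem_cons_self with h | h
      · exact Or.inl h
      · exact Or.inr (Set.mem_inv.mpr h)

lemma one_mem_wordBall {G : Type*} [Group G] (Y : Set G) (n : ℕ) :
    (1 : G) ∈ wordBall Y n :=
  ⟨[], by simp, by simp, by simp⟩

lemma simpleCommutator_snoc {G : Type*} [Group G] {r : ℕ} (y : Fin (r + 1) → G) (h : G) :
    simpleCommutator (List.ofFn (Fin.snoc y h)) =
      (simpleCommutator (List.ofFn y))⁻¹ * h⁻¹ * simpleCommutator (List.ofFn y) * h := by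
  have h1 : List.ofFn (Fin.snoc y h : Fin (r + 2) → G) = (List.ofFn y) ++ [h] := by
    rw [List.ofFn_succ' (Fin.snoc y h)]
    simp [List.concat_eq_append]
  rw [h1, List.ofFn_succ]
  simp only [simpleCommutator, List.cons_append, List.foldl_append, List.foldl_cons,
    List.foldl_nil]

open Finset in
theorem stmt0 {G : Type*} [Group G] (Y : Set G) (hYfin : Y.Finite)
    (hYgen : Subgroup.closure Y = ⊤) (N : Set G) (f : ℕ → ℝ)
    (hf : ∀ n, f n ∈ Set.Icc (0 : ℝ) 1)
    (h1 : ∀ n : ℕ, ((N ∩ wordBall Y n).ncard : ℝ) ≤ f n * ((wordBall Y n).ncard : ℝ))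
    (h2 : ∀ g ∉ N, ∀ n : ℕ,
      (({h | h ∈ wordBall Y n ∧ g⁻¹ * h⁻¹ * g * h ∈ N}).ncard : ℝ) ≤
        f n * ((wordBall Y n).ncard : ℝ)) :
    ∀ r n : ℕ,
      (({x : Fin (r + 1) → G | (∀ i, x i ∈ wordBall Y n) ∧
          simpleCommutator (List.ofFn x) ∈ N}).ncard : ℝ) ≤
        (r + 1 : ℝ) * f n * ((wordBall Y n).ncard : ℝ) ^ (r + 1) := by
  classical
  intro r n
  induction r with
  | zero =>
    have himg : {x : Fin 1 → G | (∀ i, x i ∈ wordBall Y n) ∧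
        simpleCommutator (List.ofFn x) ∈ N} =
        (fun g => (fun _ : Fin 1 => g)) '' (N ∩ wordBall Y n) := by
      ext x
      simp only [Set.mem_setOf_eq, Set.mem_image, Set.mem_inter_iff]
      constructor
      · rintro ⟨hb, hc⟩
        refine ⟨x 0, ⟨by simpa [simpleCommutator] using hc, hb 0⟩, ?_⟩
        funext i
        have : i = 0 := Subsingleton.elim _ _
        rw [this]
      · rintro ⟨g, ⟨hg, hgb⟩, rfl⟩
        exact ⟨fun _ => hgb, by simpa [simpleCommutator] using hg⟩
    rw [himg, Set.ncard_image_of_injective _ (fun a b hab => congrFun hab 0)]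
    simpa using h1 n
  | succ r ih =>
    -- setup
    have hBfin : (wordBall Y n).Finite := wordBall_finite hYfin n
    set B : Finset G := hBfin.toFinset with hB
    have hBmem : ∀ g, g ∈ B ↔ g ∈ wordBall Y n := fun g => hBfin.mem_toFinset
    have hBcard : ((wordBall Y n).ncard : ℝ) = (B.card : ℝ) := by
      rw [← hBfin.coe_toFinset, Set.ncard_coe_finset]
    have hf0 : 0 ≤ f n := (hf n).1
    have hBpos : (0 : ℝ) ≤ (B.card : ℝ) := by positivity
    -- finset versions
    set comm : G → G → G := fun c y => c⁻¹ * y⁻¹ * c * y with hcomm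
    set Sfin : ∀ k : ℕ, Finset (Fin (k + 1) → G) := fun k =>
      (Fintype.piFinset fun _ : Fin (k + 1) => B).filter
        (fun x => simpleCommutator (List.ofFn x) ∈ N) with hSfin
    have hScoe : ∀ k : ℕ, {x : Fin (k + 1) → G | (∀ i, x i ∈ wordBall Y n) ∧
        simpleCommutator (List.ofFn x) ∈ N} = ↑(Sfin k) := by
      intro k
      ext x
      simp [hSfin, Fintype.mem_piFinset, hBmem]
    have hSncard : ∀ k : ℕ, ({x : Fin (k + 1) → G | (∀ i, x i ∈ wordBall Y n) ∧
        simpleCommutator (List.ofFn x) ∈ N}).ncard = (Sfin k).card := by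
      intro k; rw [hScoe k, Set.ncard_coe_finset]
    rw [hSncard]
    rw [hSncard] at ih
    -- the two parts
    set T1 : Finset ((Fin (r + 1) → G) × G) := (Sfin r) ×ˢ B with hT1
    set T2 : Finset ((Fin (r + 1) → G) × G) :=
      ((Fintype.piFinset fun _ : Fin (r + 1) => B) ×ˢ B).filter
        (fun p => simpleCommutator (List.ofFn p.1) ∉ N ∧
          comm (simpleCommutator (List.ofFn p.1)) p.2 ∈ N) with hT2
    -- injection of S (r+1) into T1 ∪ T2
    have hinj : (Sfin (r + 1)).card ≤ (T1 ∪ T2).card := by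
      apply Finset.card_le_card_of_injOn
        (fun x => (Fin.init x, x (Fin.last (r + 1))))
      · intro x hx
        simp only [Finset.mem_coe, hSfin, Finset.mem_filter, Fintype.mem_piFinset] at hx
        obtain ⟨hxB, hxN⟩ := hx
        have hxc : simpleCommutator (List.ofFn x) =
            comm (simpleCommutator (List.ofFn (Fin.init x))) (x (Fin.last (r + 1))) := by
          conv_lhs => rw [← Fin.snoc_init_self x]
          rw [simpleCommutator_snoc]
        by_cases hc : simpleCommutator (List.ofFn (Fin.init x)) ∈ N
        · apply Finset.mem_union_left
          simp only [hT1, Finset.mem_product, hSfin, Finset.mem_filter, Fintype.mem_piFinset]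
          exact ⟨⟨fun i => hxB _, hc⟩, hxB _⟩
        · apply Finset.mem_union_right
          simp only [hT2, Finset.mem_filter, Finset.mem_product, Fintype.mem_piFinset]
          exact ⟨⟨fun i => hxB _, hxB _⟩, hc, hxc ▸ hxN⟩
      · intro x _ y _ hxy
        simp only [Prod.mk.injEq] at hxy
        conv_lhs => rw [← Fin.snoc_init_self x]
        conv_rhs => rw [← Fin.snoc_init_self y]
        rw [hxy.1, hxy.2]
    -- card of T1
    have hcardT1 : (T1.card : ℝ) ≤ ((r : ℝ) + 1) * f n * (B.card : ℝ) ^ (r + 1) * B.card := by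
      rw [hT1, Finset.card_product, Nat.cast_mul]
      apply mul_le_mul_of_nonneg_right _ hBpos
      calc ((Sfin r).card : ℝ) ≤ (r + 1 : ℝ) * f n * ((wordBall Y n).ncard : ℝ) ^ (r + 1) := ih
        _ = ((r : ℝ) + 1) * f n * (B.card : ℝ) ^ (r + 1) := by rw [hBcard]
    -- card of T2 via fibers
    have hcardT2 : (T2.card : ℝ) ≤ (B.card : ℝ) ^ (r + 1) * (f n * (B.card : ℝ)) := by
      have hfib := Finset.card_eq_sum_card_fiberwise
        (f := fun p : (Fin (r + 1) → G) × G => p.1)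
        (s := T2) (t := Fintype.piFinset fun _ : Fin (r + 1) => B)
        (fun p hp => by
          simp only [Finset.mem_coe, hT2, Finset.mem_filter, Finset.mem_product] at hp
          exact hp.1.1)
      rw [hfib]
      push_cast
      calc (∑ y ∈ Fintype.piFinset fun _ : Fin (r + 1) => B,
            ((T2.filter (fun p => p.1 = y)).card : ℝ))
          ≤ ∑ y ∈ Fintype.piFinset fun _ : Fin (r + 1) => B, f n * (B.card : ℝ) := by
            apply Finset.sum_le_sum
            intro y _
            by_cases hc : simpleCommutator (List.ofFn y) ∈ N
            · have : T2.filter (fun p => p.1 = y) = ∅ := by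
                apply Finset.filter_eq_empty_iff.mpr
                intro p hp hpy
                simp only [hT2, Finset.mem_filter] at hp
                exact hp.2.1 (hpy ▸ hc)
              rw [this]
              simp only [Finset.card_empty, Nat.cast_zero]
              positivity
            · -- use h2
              have hset : {h | h ∈ wordBall Y n ∧
                  (simpleCommutator (List.ofFn y))⁻¹ * h⁻¹ * simpleCommutator (List.ofFn y)
                    * h ∈ N} =
                  ↑(B.filter (fun h => comm (simpleCommutator (List.ofFn y)) h ∈ N)) := by
                ext h
                simp [hBmem, hcomm]
              have hb := h2 _ hc n
              rw [hset, Set.ncard_coe_finset, hBcard] at hb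
              refine le_trans ?_ hb
              have hle : (T2.filter (fun p => p.1 = y)).card ≤
                  (B.filter (fun h => comm (simpleCommutator (List.ofFn y)) h ∈ N)).card := by
                apply Finset.card_le_card_of_injOn (fun p => p.2)
                · intro p hp
                  simp only [Finset.mem_coe, Finset.mem_filter, hT2, Finset.mem_product] at hp ⊢
                  obtain ⟨⟨⟨-, hpB⟩, -, hpc⟩, hpy⟩ := hp
                  exact ⟨hpB, hpy ▸ hpc⟩
                · intro p hp q hq hpq
                  simp only [Finset.coe_filter, Set.mem_setOf_eq] at hp hq
                  exact Prod.ext (hp.2.trans hq.2.symm) hpq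
              exact_mod_cast hle
        _ = (B.card : ℝ) ^ (r + 1) * (f n * (B.card : ℝ)) := by
            rw [Finset.sum_const, Fintype.card_piFinset_const]
            simp [mul_comm]
    -- combine
    calc ((Sfin (r + 1)).card : ℝ) ≤ ((T1 ∪ T2).card : ℝ) := by exact_mod_cast hinj
      _ ≤ (T1.card : ℝ) + (T2.card : ℝ) := by exact_mod_cast Finset.card_union_le T1 T2
      _ ≤ ((r : ℝ) + 1) * f n * (B.card : ℝ) ^ (r + 1) * B.card
          + (B.card : ℝ) ^ (r + 1) * (f n * (B.card : ℝ)) := add_le_add hcardT1 hcardT2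
      _ = ((r : ℝ) + 2) * f n * (B.card : ℝ) ^ (r + 2) := by ring
      _ = ((r + 1 : ℕ) + 1 : ℝ) * f n * ((wordBall Y n).ncard : ℝ) ^ (r + 1 + 1) := by
          rw [hBcard]; push_cast; ring
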